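/- Smith's rule (optimality): For single-machine scheduling with processing times t k > 0 and weights w k > 0, any permutation σ that sorts jobs in non-decreasing order of the ratio t k / w k minimizes the total weighted completion time TWC(σ) = Σ_k w(σ k) · (Σ_{j ≤ k} t(σ j)) over all permutations. -/

import Mathlib

open Finset

/-- Total weighted completion time of a schedule `σ`. -/
def TWC {n : ℕ} (t w : Fin n → ℝ) (σ : Equiv.Perm (Fin n)) : ℝ :=
  ∑ k : Fin n, w (σ k) * ∑ j ∈ Finset.Iic k, t (σ j)

theorem TWC_pair_eq {n : ℕ} (t w : Fin n → ℝ) (π : Equiv.Perm (Fin n)) :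
    TWC t w π = (∑ a, t a * w a)
      + ∑ p ∈ (Finset.univ ×ˢ Finset.univ : Finset (Fin n × Fin n)).filter
            (fun p => p.1 < p.2),
          (if π.symm p.1 < π.symm p.2 then t p.1 * w p.2 else t p.2 * w p.1) := by
  classical
  set F : Fin n × Fin n → ℝ :=
    fun p => if π.symm p.1 < π.symm p.2 then t p.1 * w p.2 else 0 with hF
  have h1 : TWC t w π = ∑ b, ∑ a, (if π.symm a ≤ π.symm b then t a * w b else 0) := by
    unfold TWC
    have step1 : ∀ k : Fin n, w (π k) * ∑ j ∈ Finset.Iic k, t (π j)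
        = ∑ j, (if j ≤ k then t (π j) * w (π k) else 0) := by
      intro k
      rw [Finset.mul_sum]
      rw [show ∑ j, (if j ≤ k then t (π j) * w (π k) else 0)
            = ∑ j ∈ Finset.univ.filter (· ≤ k), t (π j) * w (π k) from
          (Finset.sum_filter _ _).symm]
      rw [show Finset.univ.filter (· ≤ k) = Finset.Iic k by
        ext x; simp]
      exact Finset.sum_congr rfl fun j _ => mul_comm _ _
    simp_rw [step1]
    have step2 : ∀ k : Fin n, ∑ j, (if j ≤ k then t (π j) * w (π k) else 0)
        = ∑ a, (if π.symm a ≤ π.symm (π k) then t a * w (π k) else 0) := by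
      intro k
      rw [← Equiv.sum_comp π (fun a => if π.symm a ≤ π.symm (π k) then t a * w (π k) else 0)]
      simp
    simp_rw [step2]
    rw [← Equiv.sum_comp π
      (fun b => ∑ a, (if π.symm a ≤ π.symm b then t a * w b else 0))]
  have split : ∀ a b : Fin n,
      (if π.symm a ≤ π.symm b then t a * w b else 0)
        = (if a = b then t a * w b else 0) + F (a, b) := by
    intro a b
    rcases eq_or_ne a b with rfl | hab
    · simp [hF]
    · have h : π.symm a ≠ π.symm b := fun h => hab (π.symm.injective h)
      simp only [hF, if_neg hab, zero_add]
      by_cases hlt : π.symm a < π.symm b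
      · rw [if_pos hlt.le, if_pos hlt]
      · rw [if_neg hlt, if_neg (fun hle => hlt (lt_of_le_of_ne hle h))]
  rw [h1]
  simp_rw [split, Finset.sum_add_distrib, Finset.sum_ite_eq', Finset.mem_univ, if_true]
  congr 1
  · -- ∑ b, ∑ a, F (a, b) = ∑ p ∈ filter (p.1<p.2), (F p + F p.swap)
    have hprod : ∑ b, ∑ a, F (a, b) = ∑ p ∈ (Finset.univ ×ˢ Finset.univ :
        Finset (Fin n × Fin n)), F p := by
      rw [Finset.sum_product]
      exact Finset.sum_comm
    rw [hprod]
    rw [← Finset.sum_filter_add_sum_filter_not (Finset.univ ×ˢ Finset.univ)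
      (fun p : Fin n × Fin n => p.1 < p.2) F]
    have h2 : ∑ p ∈ (Finset.univ ×ˢ Finset.univ : Finset (Fin n × Fin n)).filter
        (fun p => ¬ p.1 < p.2), F p
        = ∑ p ∈ (Finset.univ ×ˢ Finset.univ : Finset (Fin n × Fin n)).filter
        (fun p => p.2 < p.1), F p := by
      refine (Finset.sum_subset ?_ ?_).symm
      · intro p hp
        simp only [Finset.mem_filter] at hp ⊢
        exact ⟨hp.1, asymm hp.2⟩
      · intro p hp hnp
        simp only [Finset.mem_filter] at hp hnp
        have : p.1 = p.2 := le_antisymm (le_of_not_gt (fun h => hnp ⟨hp.1, h⟩)) (le_of_not_gt hp.2)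
        simp [hF, this]
    rw [h2]
    have h3 : ∑ p ∈ (Finset.univ ×ˢ Finset.univ : Finset (Fin n × Fin n)).filter
        (fun p => p.2 < p.1), F p
        = ∑ p ∈ (Finset.univ ×ˢ Finset.univ : Finset (Fin n × Fin n)).filter
        (fun p => p.1 < p.2), F p.swap := by
      refine Finset.sum_nbij' Prod.swap Prod.swap ?_ ?_ ?_ ?_ ?_
      · intro p hp; simp only [Finset.mem_filter] at hp ⊢; exact ⟨by simp, hp.2⟩
      · intro p hp; simp only [Finset.mem_filter] at hp ⊢; exact ⟨by simp, hp.2⟩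
      · intro p _; simp
      · intro p _; simp
      · intro p _; simp
    rw [h3, ← Finset.sum_add_distrib]
    refine Finset.sum_congr rfl fun p hp => ?_
    simp only [Finset.mem_filter] at hp
    have hab : p.1 ≠ p.2 := ne_of_lt hp.2
    have h : π.symm p.1 ≠ π.symm p.2 := fun h => hab (π.symm.injective h)
    simp only [hF, Prod.fst_swap, Prod.snd_swap]
    by_cases hlt : π.symm p.1 < π.symm p.2
    · rw [if_pos hlt, if_neg (asymm hlt), if_pos hlt, add_zero]
    · rw [if_neg hlt, if_pos (lt_of_le_of_ne (le_of_not_gt hlt) h.symm), if_neg hlt, zero_add]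

theorem stmt2 {n : ℕ} (t w : Fin n → ℝ)
    (ht : ∀ k, 0 < t k) (hw : ∀ k, 0 < w k)
    (σ : Equiv.Perm (Fin n))
    (hsorted : ∀ i j : Fin n, i ≤ j → t (σ i) / w (σ i) ≤ t (σ j) / w (σ j)) :
    ∀ τ : Equiv.Perm (Fin n), TWC t w σ ≤ TWC t w τ := by
  intro τ
  rw [TWC_pair_eq t w σ, TWC_pair_eq t w τ]
  refine add_le_add (le_refl _) (Finset.sum_le_sum fun p hp => ?_)
  simp only [Finset.mem_filter] at hp
  have hab : p.1 ≠ p.2 := ne_of_lt hp.2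
  have hne : σ.symm p.1 ≠ σ.symm p.2 := fun h => hab (σ.symm.injective h)
  have key : ∀ a b : Fin n, σ.symm a ≤ σ.symm b → t a * w b ≤ t b * w a := by
    intro a b hle
    have := hsorted (σ.symm a) (σ.symm b) hle
    simp only [Equiv.apply_symm_apply] at this
    exact (div_le_div_iff₀ (hw a) (hw b)).mp this
  by_cases h1 : σ.symm p.1 < σ.symm p.2 <;> by_cases h2 : τ.symm p.1 < τ.symm p.2
  · rw [if_pos h1, if_pos h2]
  · rw [if_pos h1, if_neg h2]; exact key _ _ h1.le
  · rw [if_neg h1, if_pos h2]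
    exact key _ _ (le_of_not_gt h1)
  · rw [if_neg h1, if_neg h2]
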